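/- Let K be a field, n ≥ 3, R = K[x_1,...,x_n], and J = (x_i x_j : 1 ≤ i < j ≤ n). Let ψ : R[T_1,...,T_n] → (R/J)[t] be the K-algebra homomorphism with ψ(x_i) = x_i mod J and ψ(T_i) = (x_i^{n-1} mod J)·t. Then the kernel of ψ equals the ideal of R[T_1,...,T_n] generated by J together with the monomials T_i T_j (1 ≤ i < j ≤ n) and x_j T_i (1 ≤ i, j ≤ n, i ≠ j). -/

import Mathlib

namespace KernelReesAux

open MvPolynomial
open scoped Classical

variable {K : Type} [Field K] {n : ℕ}

/-- an exponent is mixed if two distinct variables occur in it -/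
def Mixed {n : ℕ} (a : Fin n →₀ ℕ) : Prop := ∃ i j : Fin n, i ≠ j ∧ a i ≠ 0 ∧ a j ≠ 0

lemma mixed_add_left {a b : Fin n →₀ ℕ} (h : Mixed b) : Mixed (a + b) := by
  obtain ⟨i, j, hij, hi, hj⟩ := h
  refine ⟨i, j, hij, ?_, ?_⟩ <;> simp only [Finsupp.add_apply] <;> omega

lemma X_eq_monomial {A : Type} [CommSemiring A] (i : Fin n) :
    (X i : MvPolynomial (Fin n) A) = monomial (Finsupp.single i 1) 1 := by
  rw [← pow_one (X i), X_pow_eq_monomial]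

lemma X_mul_X_mul_monomial {A : Type} [CommSemiring A] (i j : Fin n) (b : Fin n →₀ ℕ) (c : A) :
    (X i : MvPolynomial (Fin n) A) * X j * monomial b c
      = monomial (Finsupp.single i 1 + Finsupp.single j 1 + b) c := by
  rw [X_eq_monomial, X_eq_monomial, monomial_mul, monomial_mul, one_mul, one_mul]

lemma single_add_single_le {a : Fin n →₀ ℕ} {i j : Fin n} (hij : i ≠ j)
    (hi : a i ≠ 0) (hj : a j ≠ 0) : Finsupp.single i 1 + Finsupp.single j 1 ≤ a := by
  rw [Finsupp.le_def]
  intro s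
  by_cases hsi : s = i
  · subst hsi
    simp only [Finsupp.add_apply, Finsupp.single_eq_same, Finsupp.single_eq_of_ne' (Ne.symm hij)]
    omega
  by_cases hsj : s = j
  · subst hsj
    simp only [Finsupp.add_apply, Finsupp.single_eq_same,
      Finsupp.single_eq_of_ne' hij]
    omega
  · simp only [Finsupp.add_apply, Finsupp.single_eq_of_ne' (Ne.symm hsi),
      Finsupp.single_eq_of_ne' (Ne.symm hsj)]
    omega

/-- the ideal of polynomials all of whose monomials are mixed -/
def mixedIdeal (K : Type) [Field K] (n : ℕ) : Ideal (MvPolynomial (Fin n) K) where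
  carrier := {p | ∀ a ∈ p.support, Mixed a}
  zero_mem' := by simp
  add_mem' := by
    intro p q hp hq a ha
    rcases Finset.mem_union.1 (MvPolynomial.support_add ha) with h | h
    exacts [hp a h, hq a h]
  smul_mem' := by
    intro c p hp a ha
    rw [smul_eq_mul] at ha
    obtain ⟨a₁, _, a₂, h2, rfl⟩ := Finset.mem_add.1 (support_mul c p ha)
    exact mixed_add_left (hp a₂ h2)

variable {J : Ideal (MvPolynomial (Fin n) K)}

lemma X_mul_X_mem_J
    (hJ : J = Ideal.span {p : MvPolynomial (Fin n) K | ∃ i j : Fin n, i < j ∧ p = X i * X j})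
    {i j : Fin n} (hij : i ≠ j) : X i * X j ∈ J := by
  rcases hij.lt_or_gt with h | h
  · exact hJ ▸ Ideal.subset_span ⟨i, j, h, rfl⟩
  · rw [mul_comm]
    exact hJ ▸ Ideal.subset_span ⟨j, i, h, rfl⟩

lemma mem_J_iff
    (hJ : J = Ideal.span {p : MvPolynomial (Fin n) K | ∃ i j : Fin n, i < j ∧ p = X i * X j})
    (p : MvPolynomial (Fin n) K) : p ∈ J ↔ ∀ a ∈ p.support, Mixed a := by
  constructor
  · intro hp
    have hle : J ≤ mixedIdeal K n := by
      rw [hJ, Ideal.span_le]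
      rintro _ ⟨i, j, hij, rfl⟩ a ha
      obtain ⟨a₁, h1, a₂, h2, rfl⟩ := Finset.mem_add.1 (support_mul (X i) (X j) ha)
      rw [support_X, Finset.mem_singleton] at h1 h2
      subst h1; subst h2
      refine ⟨i, j, hij.ne, ?_, ?_⟩
      · simp [Finsupp.single_eq_of_ne hij.ne]
      · simp [Finsupp.single_eq_of_ne hij.ne']
    exact hle hp
  · intro h
    rw [← p.support_sum_monomial_coeff]
    refine Ideal.sum_mem _ fun a ha => ?_
    obtain ⟨i, j, hij, hi, hj⟩ := h a ha
    have hle := single_add_single_le hij hi hj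
    have heq := X_mul_X_mul_monomial (A := K) i j
      (a - (Finsupp.single i 1 + Finsupp.single j 1)) (coeff a p)
    rw [add_tsub_cancel_of_le hle] at heq
    rw [← heq]
    exact Ideal.mul_mem_right _ _ (X_mul_X_mem_J hJ hij)

lemma eq_zero_of_pure_of_mem_J
    (hJ : J = Ideal.span {p : MvPolynomial (Fin n) K | ∃ i j : Fin n, i < j ∧ p = X i * X j})
    {p : MvPolynomial (Fin n) K} (hp : p ∈ J) (h : ∀ a ∈ p.support, ¬ Mixed a) : p = 0 := by
  rw [← support_eq_empty, Finset.eq_empty_iff_forall_notMem]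
  intro a ha
  exact h a ha ((mem_J_iff hJ p).1 hp a ha)

lemma X_pow_mul_X_pow_mem_J
    (hJ : J = Ideal.span {p : MvPolynomial (Fin n) K | ∃ i j : Fin n, i < j ∧ p = X i * X j})
    {i j : Fin n} (hij : i ≠ j) {a b : ℕ} (ha : a ≠ 0) (hb : b ≠ 0) :
    (X i : MvPolynomial (Fin n) K) ^ a * X j ^ b ∈ J := by
  rw [mem_J_iff hJ]
  intro d hd
  rw [X_pow_eq_monomial, X_pow_eq_monomial, monomial_mul, support_monomial,
    if_neg (by norm_num : (1 : K) * 1 ≠ 0), Finset.mem_singleton] at hd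
  subst hd
  refine ⟨i, j, hij, ?_, ?_⟩
  · simp [Finsupp.single_eq_of_ne hij.symm, ha]
  · simp [Finsupp.single_eq_of_ne hij, hb]



lemma mem_support_sum_monomial {s : Finset (Fin n →₀ ℕ)} {f : (Fin n →₀ ℕ) → K} {a : Fin n →₀ ℕ}
    (ha : a ∈ (∑ v ∈ s, monomial v (f v)).support) : a ∈ s := by
  rw [mem_support_iff] at ha
  by_contra h
  apply ha
  rw [coeff_sum]
  refine Finset.sum_eq_zero fun v hv => ?_
  rw [coeff_monomial, if_neg]
  rintro rfl; exact h hv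

noncomputable def purePart (i : Fin n) (r : MvPolynomial (Fin n) K) : MvPolynomial (Fin n) K :=
  ∑ a ∈ r.support.filter (fun a => ∀ j, j ≠ i → a j = 0), monomial a (coeff a r)

noncomputable def impurePart (i : Fin n) (r : MvPolynomial (Fin n) K) : MvPolynomial (Fin n) K :=
  ∑ a ∈ r.support.filter (fun a => ¬ ∀ j, j ≠ i → a j = 0), monomial a (coeff a r)

lemma pure_add_impure (i : Fin n) (r : MvPolynomial (Fin n) K) :
    purePart i r + impurePart i r = r := by
  rw [purePart, impurePart, Finset.sum_filter_add_sum_filter_not, ← as_sum]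

lemma mem_support_purePart {i : Fin n} {r : MvPolynomial (Fin n) K} {a : Fin n →₀ ℕ}
    (ha : a ∈ (purePart i r).support) : ∀ j, j ≠ i → a j = 0 :=
  (Finset.mem_filter.1 (mem_support_sum_monomial ha)).2

lemma mem_support_impurePart {i : Fin n} {r : MvPolynomial (Fin n) K} {a : Fin n →₀ ℕ}
    (ha : a ∈ (impurePart i r).support) : ∃ j, j ≠ i ∧ a j ≠ 0 := by
  have := (Finset.mem_filter.1 (mem_support_sum_monomial ha)).2
  push_neg at this
  exact this

lemma sum_single_apply (i : Fin n) (m : ℕ) : (∑ j, (Finsupp.single i m) j) = m := by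
  rw [Finset.sum_eq_single i (fun j _ hj => Finsupp.single_eq_of_ne' (Ne.symm hj))
    (fun h => absurd (Finset.mem_univ i) h), Finsupp.single_eq_same]

lemma prod_X_pow (d : Fin n →₀ ℕ) :
    (∏ i, (X i : MvPolynomial (Fin n) K) ^ (d i)) = monomial d 1 := by
  rw [monomial_eq, map_one, one_mul, Finsupp.prod_fintype]
  exact fun i => pow_zero _

noncomputable def ψ (J : Ideal (MvPolynomial (Fin n) K)) :
    MvPolynomial (Fin n) (MvPolynomial (Fin n) K) →+* Polynomial (MvPolynomial (Fin n) K ⧸ J) :=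
  eval₂Hom ((Polynomial.C).comp (Ideal.Quotient.mk J)) fun i =>
    Polynomial.C (Ideal.Quotient.mk J (X i ^ (n - 1))) * Polynomial.X

lemma psi_monomial (J : Ideal (MvPolynomial (Fin n) K)) (b : Fin n →₀ ℕ)
    (r : MvPolynomial (Fin n) K) :
    ψ J (monomial b r) = Polynomial.C (Ideal.Quotient.mk J (r * monomial ((n - 1) • b) 1)) *
      Polynomial.X ^ (∑ i, b i) := by
  rw [ψ, coe_eval₂Hom, eval₂_monomial]
  rw [Finsupp.prod_fintype _ _ (fun i => pow_zero _)]
  have h1 : ∀ i : Fin n, (Polynomial.C (Ideal.Quotient.mk J (X i ^ (n - 1))) * Polynomial.X) ^ (b i)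
      = Polynomial.C (Ideal.Quotient.mk J (X i ^ ((n - 1) * b i))) * Polynomial.X ^ (b i) := by
    intro i
    rw [(Polynomial.commute_X _).symm.mul_pow, ← Polynomial.C_pow, ← map_pow, ← pow_mul]
  simp only [h1]
  have h2 : (∏ i, (X i : MvPolynomial (Fin n) K) ^ ((n - 1) * b i)) = monomial ((n - 1) • b) (1 : K) := by
    rw [← prod_X_pow ((n - 1) • b)]
    exact Finset.prod_congr rfl fun i _ => by rw [Finsupp.smul_apply, smul_eq_mul]
  rw [Finset.prod_mul_distrib, ← map_prod, ← map_prod, h2, Finset.prod_pow_eq_pow_sum,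
    ← mul_assoc, RingHom.comp_apply, ← Polynomial.C_mul, ← map_mul]


lemma psi_coeff_eq_zero (J : Ideal (MvPolynomial (Fin n) K))
    {p : MvPolynomial (Fin n) (MvPolynomial (Fin n) K)} (hp : ψ J p = 0) (k : ℕ) :
    (∑ b ∈ p.support, if k = (∑ i, b i) then
      Ideal.Quotient.mk J (coeff b p * monomial ((n - 1) • b) 1) else 0) = 0 := by
  have h1 : ψ J p = ∑ b ∈ p.support,
      Polynomial.C (Ideal.Quotient.mk J (coeff b p * monomial ((n - 1) • b) 1)) *
        Polynomial.X ^ (∑ i, b i) := by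
    conv_lhs => rw [p.as_sum]
    rw [map_sum]
    exact Finset.sum_congr rfl fun b _ => psi_monomial J b (coeff b p)
  have h2 := congrArg (fun q => Polynomial.coeff q k) (h1.symm.trans hp)
  simp only [Polynomial.finset_sum_coeff, Polynomial.coeff_zero, Polynomial.coeff_C_mul,
    Polynomial.coeff_X_pow, mul_ite, mul_one, mul_zero] at h2
  exact h2

variable {J : Ideal (MvPolynomial (Fin n) K)}

lemma impure_mul_mem_J
    (hJ : J = Ideal.span {p : MvPolynomial (Fin n) K | ∃ i j : Fin n, i < j ∧ p = X i * X j})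
    (i : Fin n) {m : ℕ} (hm : m ≠ 0) {r : MvPolynomial (Fin n) K}
    (hr : ∀ a ∈ r.support, ∃ j, j ≠ i ∧ a j ≠ 0) :
    r * monomial (Finsupp.single i m) 1 ∈ J := by
  rw [mem_J_iff hJ]
  intro d hd
  obtain ⟨a₁, h1, a₂, h2, rfl⟩ := Finset.mem_add.1 (support_mul _ _ hd)
  rw [support_monomial, if_neg one_ne_zero, Finset.mem_singleton] at h2
  subst h2
  obtain ⟨j, hji, hj⟩ := hr a₁ h1
  refine ⟨j, i, hji, ?_, ?_⟩
  · simp only [Finsupp.add_apply, Finsupp.single_eq_of_ne (Ne.symm hji)]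
    omega
  · simp only [Finsupp.add_apply, Finsupp.single_eq_same]
    omega

lemma support_pure_mul {i : Fin n} {M : ℕ} (hM : M ≠ 0) (r : MvPolynomial (Fin n) K)
    {a : Fin n →₀ ℕ}
    (ha : a ∈ (purePart i r * monomial (Finsupp.single i M) (1 : K)).support) :
    (∀ j, j ≠ i → a j = 0) ∧ a i ≠ 0 := by
  obtain ⟨a₁, h1, a₂, h2, rfl⟩ := Finset.mem_add.1 (support_mul _ _ ha)
  rw [support_monomial, if_neg one_ne_zero, Finset.mem_singleton] at h2
  subst h2
  have hp := mem_support_purePart h1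
  constructor
  · intro j hj
    simp only [Finsupp.add_apply, Finsupp.single_eq_of_ne' (Ne.symm hj), hp j hj, add_zero]
  · simp only [Finsupp.add_apply, Finsupp.single_eq_same]
    omega

section Slemmas

variable {I : Ideal (MvPolynomial (Fin n) (MvPolynomial (Fin n) K))}

lemma monomial_mem_of_mixed
    (hI2 : ∀ i j : Fin n, i ≠ j →
      (X i : MvPolynomial (Fin n) (MvPolynomial (Fin n) K)) * X j ∈ I)
    {b : Fin n →₀ ℕ} (hb : Mixed b) (r : MvPolynomial (Fin n) K) :
    monomial b r ∈ I := by
  obtain ⟨i, j, hij, hi, hj⟩ := hb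
  have hle := single_add_single_le hij hi hj
  have heq := X_mul_X_mul_monomial (A := MvPolynomial (Fin n) K) i j
    (b - (Finsupp.single i 1 + Finsupp.single j 1)) r
  rw [add_tsub_cancel_of_le hle] at heq
  rw [← heq]
  exact Ideal.mul_mem_right _ _ (hI2 i j hij)

lemma monomial_monomial_mem
    (hI3 : ∀ i j : Fin n, i ≠ j →
      (C (X j) : MvPolynomial (Fin n) (MvPolynomial (Fin n) K)) * X i ∈ I)
    {i j : Fin n} (hij : i ≠ j) {b a : Fin n →₀ ℕ} (hb : b i ≠ 0) (ha : a j ≠ 0) (c : K) :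
    monomial b (monomial a c) ∈ I := by
  have hble : Finsupp.single i 1 ≤ b := Finsupp.single_le_iff.2 (Nat.one_le_iff_ne_zero.2 hb)
  have hale : Finsupp.single j 1 ≤ a := Finsupp.single_le_iff.2 (Nat.one_le_iff_ne_zero.2 ha)
  have heq : (C (X j) : MvPolynomial (Fin n) (MvPolynomial (Fin n) K)) * X i *
      monomial (b - Finsupp.single i 1) (monomial (a - Finsupp.single j 1) c)
      = monomial b (monomial a c) := by
    rw [C_apply, X_eq_monomial (A := MvPolynomial (Fin n) K) i, monomial_mul, monomial_mul,
      zero_add, add_tsub_cancel_of_le hble]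
    congr 1
    rw [mul_one, X_eq_monomial (A := K) j, monomial_mul, one_mul, add_tsub_cancel_of_le hale]
  rw [← heq]
  exact Ideal.mul_mem_right _ _ (hI3 i j hij)

lemma monomial_impure_mem
    (hI3 : ∀ i j : Fin n, i ≠ j →
      (C (X j) : MvPolynomial (Fin n) (MvPolynomial (Fin n) K)) * X i ∈ I)
    {i : Fin n} {b : Fin n →₀ ℕ} (hb : b i ≠ 0) {r : MvPolynomial (Fin n) K}
    (hr : ∀ a ∈ r.support, ∃ j, j ≠ i ∧ a j ≠ 0) :
    monomial b r ∈ I := by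
  have hrs : (monomial b) r = ∑ a ∈ r.support, monomial b (monomial a (coeff a r)) := by
    conv_lhs => rw [r.as_sum]
    rw [map_sum]
  rw [hrs]
  refine Ideal.sum_mem _ fun a ha => ?_
  obtain ⟨j, hji, hj⟩ := hr a ha
  exact monomial_monomial_mem hI3 (Ne.symm hji) hb hj _

end Slemmas


noncomputable def Fc (J : Ideal (MvPolynomial (Fin n) K))
    (p : MvPolynomial (Fin n) (MvPolynomial (Fin n) K)) (k : ℕ) (b' : Fin n →₀ ℕ) :
    MvPolynomial (Fin n) K ⧸ J :=
  if k = (∑ i, b' i) then Ideal.Quotient.mk J (coeff b' p * monomial ((n - 1) • b') 1) else 0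

lemma sum_Fc_eq_zero (J : Ideal (MvPolynomial (Fin n) K))
    {p : MvPolynomial (Fin n) (MvPolynomial (Fin n) K)} (hp : ψ J p = 0) (k : ℕ) :
    (∑ b ∈ p.support, Fc J p k b) = 0 :=
  psi_coeff_eq_zero J hp k

lemma Fc_single (J : Ideal (MvPolynomial (Fin n) K))
    (p : MvPolynomial (Fin n) (MvPolynomial (Fin n) K)) (k : ℕ) (i : Fin n) :
    Fc J p k (Finsupp.single i k) =
      Ideal.Quotient.mk J (coeff (Finsupp.single i k) p *
        monomial (Finsupp.single i ((n - 1) * k)) 1) := by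
  rw [Fc, if_pos (sum_single_apply i k).symm, Finsupp.smul_single, smul_eq_mul]

lemma Fc_not_support (J : Ideal (MvPolynomial (Fin n) K))
    (p : MvPolynomial (Fin n) (MvPolynomial (Fin n) K)) (k : ℕ) {b' : Fin n →₀ ℕ}
    (hb' : b' ∉ p.support) : Fc J p k b' = 0 := by
  rw [Fc, notMem_support_iff.1 hb', zero_mul, map_zero, ite_self]

end KernelReesAux




open KernelReesAux


/-- Let `n ≥ 3`, `R = K[x_1,…,x_n]`, and
`J = (x_i x_j : 1 ≤ i < j ≤ n)`.  Let `ψ : R[T_1,…,T_n] → (R/J)[t]` be the algebra map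
with `ψ(x_i) = x_i mod J` and `ψ(T_i) = (x_i^{n-1} mod J)·t` (here `R[T_1,…,T_n]` is
`MvPolynomial (Fin n) R`, the `T_i` are its variables `X i`, and the elements of `R` sit
inside it via `C`).  Then `ker ψ` is the ideal generated by (the image of) `J`, the
monomials `T_i T_j` (`i < j`) and the monomials `x_j T_i` (`i ≠ j`). -/
theorem kernel_rees_presentation {K : Type} [Field K] {n : ℕ} (hn : 3 ≤ n)
    (J : Ideal (MvPolynomial (Fin n) K))
    (hJ : J = Ideal.span
      {p : MvPolynomial (Fin n) K | ∃ i j : Fin n, i < j ∧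
        p = MvPolynomial.X i * MvPolynomial.X j}) :
    RingHom.ker
        (MvPolynomial.eval₂Hom
          ((Polynomial.C :
              (MvPolynomial (Fin n) K ⧸ J) →+* Polynomial (MvPolynomial (Fin n) K ⧸ J)).comp
            (Ideal.Quotient.mk J))
          (fun i : Fin n =>
            Polynomial.C (Ideal.Quotient.mk J (MvPolynomial.X i ^ (n - 1))) * Polynomial.X)) =
      Ideal.span
        ((MvPolynomial.C '' (J : Set (MvPolynomial (Fin n) K))) ∪
          {q : MvPolynomial (Fin n) (MvPolynomial (Fin n) K) | ∃ i j : Fin n, i < j ∧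
            q = MvPolynomial.X i * MvPolynomial.X j} ∪
          {q : MvPolynomial (Fin n) (MvPolynomial (Fin n) K) | ∃ i j : Fin n, i ≠ j ∧
            q = MvPolynomial.C (MvPolynomial.X j) * MvPolynomial.X i}) := by
  classical
  open MvPolynomial in
  have hn1 : n - 1 ≠ 0 := by omega
  set G : Set (MvPolynomial (Fin n) (MvPolynomial (Fin n) K)) :=
    (MvPolynomial.C '' (J : Set (MvPolynomial (Fin n) K))) ∪
      {q : MvPolynomial (Fin n) (MvPolynomial (Fin n) K) | ∃ i j : Fin n, i < j ∧
        q = MvPolynomial.X i * MvPolynomial.X j} ∪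
      {q : MvPolynomial (Fin n) (MvPolynomial (Fin n) K) | ∃ i j : Fin n, i ≠ j ∧
        q = MvPolynomial.C (MvPolynomial.X j) * MvPolynomial.X i} with hG
  have hker : RingHom.ker
      (MvPolynomial.eval₂Hom
        ((Polynomial.C :
            (MvPolynomial (Fin n) K ⧸ J) →+* Polynomial (MvPolynomial (Fin n) K ⧸ J)).comp
          (Ideal.Quotient.mk J))
        (fun i : Fin n =>
          Polynomial.C (Ideal.Quotient.mk J (MvPolynomial.X i ^ (n - 1))) * Polynomial.X))
      = RingHom.ker (ψ J) := rfl
  rw [hker]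
  have hI1 : ∀ r ∈ J, (C r : MvPolynomial (Fin n) (MvPolynomial (Fin n) K)) ∈ Ideal.span G := by
    intro r hr
    apply Ideal.subset_span
    rw [hG]
    exact Or.inl (Or.inl ⟨r, hr, rfl⟩)
  have hI2 : ∀ i j : Fin n, i ≠ j →
      (X i : MvPolynomial (Fin n) (MvPolynomial (Fin n) K)) * X j ∈ Ideal.span G := by
    intro i j hij
    rcases hij.lt_or_gt with h | h
    · exact Ideal.subset_span (by rw [hG]; exact Or.inl (Or.inr ⟨i, j, h, rfl⟩))
    · rw [mul_comm]
      exact Ideal.subset_span (by rw [hG]; exact Or.inl (Or.inr ⟨j, i, h, rfl⟩))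
  have hI3 : ∀ i j : Fin n, i ≠ j →
      (C (X j) : MvPolynomial (Fin n) (MvPolynomial (Fin n) K)) * X i ∈ Ideal.span G := by
    intro i j hij
    exact Ideal.subset_span (by rw [hG]; exact Or.inr ⟨i, j, hij, rfl⟩)
  refine le_antisymm (fun p hp => ?_) (Ideal.span_le.2 ?_)
  · -- hard direction
    have hp' : ψ J p = 0 := RingHom.mem_ker.mp hp
    have hco := fun k => sum_Fc_eq_zero J hp' k
    rw [← p.support_sum_monomial_coeff]
    refine Ideal.sum_mem _ fun b hb => ?_
    by_cases hbm : Mixed b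
    · exact monomial_mem_of_mixed hI2 hbm _
    by_cases hb0 : b = 0
    · subst hb0
      have h0 := hco 0
      rw [Finset.sum_eq_single_of_mem (0 : Fin n →₀ ℕ) hb ?_] at h0
      · rw [Fc] at h0
        simp only [Finsupp.coe_zero, Pi.zero_apply, Finset.sum_const_zero, if_pos rfl,
          smul_zero, monomial_zero', map_one, mul_one] at h0
        rw [← C_apply]
        exact hI1 _ (Ideal.Quotient.eq_zero_iff_mem.1 h0)
      · intro b' _ hne
        rw [Fc, if_neg, ]
        intro h
        apply hne
        ext i
        simpa using (Finset.sum_eq_zero_iff.1 h.symm) i (Finset.mem_univ i)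
    · -- b is a nonzero pure power
      obtain ⟨i₀, hi₀⟩ : ∃ i, b i ≠ 0 := by
        by_contra h
        push_neg at h
        exact hb0 (Finsupp.ext h)
      have hpure : ∀ j, j ≠ i₀ → b j = 0 := by
        intro j hj
        by_contra hbj
        exact hbm ⟨i₀, j, Ne.symm hj, hi₀, hbj⟩
      have hbsingle : b = Finsupp.single i₀ (b i₀) := by
        ext j
        rcases eq_or_ne j i₀ with rfl | hji
        · rw [Finsupp.single_eq_same]
        · rw [Finsupp.single_eq_of_ne' (Ne.symm hji), hpure j hji]
      set k := b i₀ with hkdef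
      have hk0 : k ≠ 0 := hi₀
      set M := (n - 1) * k with hMdef
      have hM0 : M ≠ 0 := Nat.mul_ne_zero hn1 hk0
      set E : Finset (Fin n →₀ ℕ) :=
        Finset.image (fun i => Finsupp.single i k) Finset.univ with hE
      have hsum1 : ∑ b' ∈ p.support, Fc J p k b' = ∑ b' ∈ p.support ∪ E, Fc J p k b' :=
        Finset.sum_subset Finset.subset_union_left
          (fun b' _ hb' => Fc_not_support J p k hb')
      have hsum2 : ∑ b' ∈ E, Fc J p k b' = ∑ b' ∈ p.support ∪ E, Fc J p k b' := by
        refine Finset.sum_subset Finset.subset_union_right ?_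
        intro b' _ hbE
        rw [Fc]
        split_ifs with hkd
        · by_cases hmix : Mixed b'
          · rw [Ideal.Quotient.eq_zero_iff_mem]
            refine Ideal.mul_mem_left _ _ ?_
            rw [mem_J_iff hJ]
            intro d hd
            rw [support_monomial, if_neg one_ne_zero, Finset.mem_singleton] at hd
            subst hd
            obtain ⟨i, j, hij, hi, hj⟩ := hmix
            refine ⟨i, j, hij, ?_, ?_⟩
            · simp only [Finsupp.smul_apply, smul_eq_mul]
              exact Nat.mul_ne_zero hn1 hi
            · simp only [Finsupp.smul_apply, smul_eq_mul]
              exact Nat.mul_ne_zero hn1 hj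
          · exfalso
            apply hbE
            by_cases hb'0 : b' = 0
            · subst hb'0
              simp only [Finsupp.coe_zero, Pi.zero_apply, Finset.sum_const_zero] at hkd
              exact absurd hkd hk0
            obtain ⟨i, hi⟩ : ∃ i, b' i ≠ 0 := by
              by_contra h
              push_neg at h
              exact hb'0 (Finsupp.ext h)
            have hpb : ∀ j, j ≠ i → b' j = 0 := by
              intro j hj
              by_contra hbj
              exact hmix ⟨i, j, Ne.symm hj, hi, hbj⟩
            have hsb : b' = Finsupp.single i (b' i) := by
              ext j
              rcases eq_or_ne j i with rfl | hji
              · rw [Finsupp.single_eq_same]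
              · rw [Finsupp.single_eq_of_ne' (Ne.symm hji), hpb j hji]
            have hsumb : (∑ j, b' j) = b' i := by
              conv_lhs => rw [hsb]
              exact sum_single_apply i (b' i)
            have hbk : b' i = k := by rw [hkd]; exact hsumb.symm
            rw [hE, Finset.mem_image]
            exact ⟨i, Finset.mem_univ i, by rw [← hbk, ← hsb]⟩
        · rfl
      have hsum3 : ∑ b' ∈ E, Fc J p k b' = ∑ i : Fin n, Fc J p k (Finsupp.single i k) := by
        rw [hE]
        exact Finset.sum_image (fun i _ j _ h => Finsupp.single_left_injective hk0 h)
      have h4 : (∑ i : Fin n, Fc J p k (Finsupp.single i k)) = 0 := by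
        rw [← hsum3, hsum2, ← hsum1, hco k]
      simp only [Fc_single, ← hMdef] at h4
      have hstep : ∀ i : Fin n,
          Ideal.Quotient.mk J (coeff (Finsupp.single i k) p * monomial (Finsupp.single i M) 1)
          = Ideal.Quotient.mk J
              (purePart i (coeff (Finsupp.single i k) p) * monomial (Finsupp.single i M) 1) := by
        intro i
        rw [Ideal.Quotient.eq, ← sub_mul,
          (eq_sub_of_add_eq' (pure_add_impure i (coeff (Finsupp.single i k) p))).symm]
        exact impure_mul_mem_J hJ i hM0 (fun a ha => mem_support_impurePart ha)
      simp only [hstep] at h4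
      set u : MvPolynomial (Fin n) K :=
        ∑ i : Fin n, purePart i (coeff (Finsupp.single i k) p) *
          monomial (Finsupp.single i M) 1 with hu
      have huJ : u ∈ J := by
        rw [← Ideal.Quotient.eq_zero_iff_mem, hu, map_sum]
        exact h4
      have hu0 : u = 0 := by
        rw [← support_eq_empty, Finset.eq_empty_iff_forall_notMem]
        intro a ha
        obtain ⟨i, hi⟩ : ∃ i : Fin n, a ∈ (purePart i (coeff (Finsupp.single i k) p) *
            monomial (Finsupp.single i M) (1 : K)).support := by
          by_contra h
          push_neg at h
          have hz : coeff a u = 0 := by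
            rw [hu, coeff_sum]
            exact Finset.sum_eq_zero fun i _ => notMem_support_iff.1 (h i)
          exact mem_support_iff.1 ha hz
        obtain ⟨hpa, hai⟩ := support_pure_mul hM0 _ hi
        obtain ⟨j₁, j₂, hne, hj1, hj2⟩ := (mem_J_iff hJ u).1 huJ a ha
        have h1 : j₁ = i := by
          by_contra h
          exact hj1 (hpa j₁ h)
        have h2 : j₂ = i := by
          by_contra h
          exact hj2 (hpa j₂ h)
        exact hne (h1.trans h2.symm)
      have hv0 : purePart i₀ (coeff (Finsupp.single i₀ k) p) *
          monomial (Finsupp.single i₀ M) (1 : K) = 0 := by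
        by_contra hne
        obtain ⟨a, ha⟩ := support_nonempty.2 hne
        obtain ⟨hpa, hai⟩ := support_pure_mul hM0 _ ha
        have hcu : coeff a u = coeff a (purePart i₀ (coeff (Finsupp.single i₀ k) p) *
            monomial (Finsupp.single i₀ M) (1 : K)) := by
          rw [hu, coeff_sum]
          refine Finset.sum_eq_single i₀ (fun i _ hii => ?_)
            (fun h => absurd (Finset.mem_univ i₀) h)
          have hnm : a ∉ (purePart i (coeff (Finsupp.single i k) p) *
              monomial (Finsupp.single i M) (1 : K)).support := by
            intro hmem
            obtain ⟨hpa', _⟩ := support_pure_mul hM0 _ hmem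
            exact hai (hpa' i₀ (Ne.symm hii))
          exact notMem_support_iff.1 hnm
        have hz : coeff a (purePart i₀ (coeff (Finsupp.single i₀ k) p) *
            monomial (Finsupp.single i₀ M) (1 : K)) = 0 := by
          rw [← hcu, hu0, coeff_zero]
        exact mem_support_iff.1 ha hz
      have hpp : purePart i₀ (coeff (Finsupp.single i₀ k) p) = 0 := by
        rcases mul_eq_zero.1 hv0 with h | h
        · exact h
        · exact absurd h (by simp [monomial_eq_zero])
      rw [hbsingle]
      have hcoeffb : coeff (Finsupp.single i₀ k) p =
          impurePart i₀ (coeff (Finsupp.single i₀ k) p) := by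
        have h := pure_add_impure i₀ (coeff (Finsupp.single i₀ k) p)
        rw [hpp, zero_add] at h
        exact h.symm
      rw [hcoeffb]
      refine monomial_impure_mem hI3 ?_ (fun a ha => mem_support_impurePart ha)
      rw [Finsupp.single_eq_same]
      exact hk0
  · -- easy direction : generators are in the kernel
    rw [hG]
    rintro q ((⟨r, hr, rfl⟩ | ⟨i, j, hij, rfl⟩) | ⟨i, j, hij, rfl⟩)
    · rw [SetLike.mem_coe, RingHom.mem_ker]
      show ψ J (C r) = 0
      rw [C_apply, psi_monomial]
      have : Ideal.Quotient.mk J (r * monomial ((n - 1) • (0 : Fin n →₀ ℕ)) 1) = 0 := by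
        rw [Ideal.Quotient.eq_zero_iff_mem, smul_zero, monomial_zero', map_one, mul_one]
        exact hr
      rw [this, map_zero, zero_mul]
    · rw [SetLike.mem_coe, RingHom.mem_ker]
      show ψ J (X i * X j) = 0
      have h1 : (X i : MvPolynomial (Fin n) (MvPolynomial (Fin n) K)) * X j
          = monomial (Finsupp.single i 1 + Finsupp.single j 1) 1 := by
        rw [X_eq_monomial, X_eq_monomial, monomial_mul, one_mul]
      rw [h1, psi_monomial]
      have h2 : Ideal.Quotient.mk J ((1 : MvPolynomial (Fin n) K) *
          monomial ((n - 1) • (Finsupp.single i 1 + Finsupp.single j 1)) 1) = 0 := by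
        rw [one_mul, Ideal.Quotient.eq_zero_iff_mem]
        have h3 : (n - 1) • (Finsupp.single i 1 + Finsupp.single j 1)
            = Finsupp.single i (n - 1) + Finsupp.single j (n - 1) := by
          rw [smul_add, Finsupp.smul_single, Finsupp.smul_single, smul_eq_mul, mul_one]
        rw [h3]
        have h4 := X_pow_mul_X_pow_mem_J hJ hij.ne hn1 hn1
        rwa [X_pow_eq_monomial, X_pow_eq_monomial, monomial_mul, one_mul] at h4
      rw [h2, map_zero, zero_mul]
    · rw [SetLike.mem_coe, RingHom.mem_ker]
      show ψ J (C (X j) * X i) = 0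
      have h1 : (C (X j) : MvPolynomial (Fin n) (MvPolynomial (Fin n) K)) * X i
          = monomial (Finsupp.single i 1) (X j) := by
        rw [C_apply, X_eq_monomial (A := MvPolynomial (Fin n) K) i, monomial_mul, zero_add,
          mul_one]
      rw [h1, psi_monomial]
      have h2 : Ideal.Quotient.mk J ((X j : MvPolynomial (Fin n) K) *
          monomial ((n - 1) • Finsupp.single i 1) 1) = 0 := by
        rw [Ideal.Quotient.eq_zero_iff_mem, Finsupp.smul_single, smul_eq_mul, mul_one]
        have h3 : (X j : MvPolynomial (Fin n) K) * monomial (Finsupp.single i (n - 1)) 1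
            = X j ^ 1 * X i ^ (n - 1) := by
          rw [pow_one, X_pow_eq_monomial]
        rw [h3]
        exact X_pow_mul_X_pow_mem_J hJ (Ne.symm hij) one_ne_zero hn1
      rw [h2, map_zero, zero_mul]
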